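/- Let C be a pure d-dimensional simplicial complex and F a face of C. Then F is a shedding face of C (i.e., the deletion del_F(C) is pure of dimension d) if and only if for every element f of F and every facet H of C containing F, there exists a facet H' of C with H ∩ H' = H \ {f} (i.e., H' is adjacent to H and omits f). -/

import Mathlib

open Finset

variable {V : Type*} [DecidableEq V]

/-- A simplicial complex: a finite collection of finite faces closed under subsets. -/
def IsComplex (C : Finset (Finset V)) : Prop :=
  ∀ F ∈ C, ∀ G, G ⊆ F → G ∈ C

/-- `F` is a facet (maximal face) of `C`. -/
def IsFacet (C : Finset (Finset V)) (F : Finset V) : Prop :=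
  F ∈ C ∧ ∀ G ∈ C, F ⊆ G → F = G

/-- `C` is pure of dimension `d`: all facets have cardinality `d+1`. -/
def IsPure (C : Finset (Finset V)) (d : ℕ) : Prop :=
  ∀ F, IsFacet C F → F.card = d + 1

/-- The deletion of a face `F`: all faces not containing `F`. -/
def del (C : Finset (Finset V)) (F : Finset V) : Finset (Finset V) :=
  C.filter (fun G => ¬ F ⊆ G)

/-- The link of a face `F`. -/
def lk (C : Finset (Finset V)) (F : Finset V) : Finset (Finset V) :=
  C.filter (fun G => G ∩ F = ∅ ∧ G ∪ F ∈ C)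

/-- The simplicial complex generated by a collection of faces. -/
def gen (S : Finset (Finset V)) : Finset (Finset V) :=
  S.biUnion Finset.powerset

/-- `C` is a (full) simplex. -/
def IsSimplexCx (C : Finset (Finset V)) : Prop :=
  ∃ F : Finset V, C = F.powerset

/-- `F` is a shedding face of the pure `d`-dimensional complex `C`. -/
def Shedding (C : Finset (Finset V)) (d : ℕ) (F : Finset V) : Prop :=
  F ∈ C ∧ IsPure (del C F) d

/-- `k`-decomposability (Provan–Billera): a simplex, or there is a shedding face `F`
with `dim F ≤ k` whose deletion and link are again `k`-decomposable. -/
inductive Decomp : ℕ → Finset (Finset V) → Prop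
  | simplex (k : ℕ) (C : Finset (Finset V)) : IsSimplexCx C → Decomp k C
  | shed (k : ℕ) (C : Finset (Finset V)) (F : Finset V) (d : ℕ) :
      F ∈ C → F.Nonempty → F.card ≤ k + 1 → IsPure C d → IsPure (del C F) d →
      Decomp k (del C F) → Decomp k (lk C F) → Decomp k C

/-- The 1-dimensional skeleton of a complex, as a simple graph. -/
def skel (C : Finset (Finset V)) : SimpleGraph V where
  Adj x y := x ≠ y ∧ ({x, y} : Finset V) ∈ C
  symm := ⟨by
    rintro x y ⟨hxy, hm⟩
    exact ⟨hxy.symm, by rwa [Finset.pair_comm]⟩⟩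
  loopless := ⟨fun x h => h.1 rfl⟩

/-- A shelling of a pure `d`-dimensional complex: an ordering of the facets such that
each facet meets the union of the previous ones in a pure `(d-1)`-dimensional complex. -/
def IsShelling (C : Finset (Finset V)) (d : ℕ) (L : List (Finset V)) : Prop :=
  L.Nodup ∧ (∀ F, IsFacet C F ↔ F ∈ L) ∧
  ∀ i : ℕ, 1 ≤ i → ∀ h : i < L.length,
    IsPure (gen (L.take i).toFinset ∩ (L.get ⟨i, h⟩).powerset) (d - 1)

open scoped Classical in
/-- `full^d(G)`: the pure `d`-dimensional complex generated by all `(d+1)`-cliques of `G`. -/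
noncomputable def fullC [Fintype V] (d : ℕ) (G : SimpleGraph V) : Finset (Finset V) :=
  gen ((Finset.univ.powerset).filter fun s => G.IsClique (↑s : Set V) ∧ s.card = d + 1)

open scoped Classical in
/-- All `(d+1)`-cliques of `G` containing the set `e`. -/
noncomputable def cliquesWith [Fintype V] (d : ℕ) (G : SimpleGraph V) (e : Finset V) :
    Finset (Finset V) :=
  (Finset.univ.powerset).filter fun s => G.IsClique (↑s : Set V) ∧ s.card = d + 1 ∧ e ⊆ s

/-- `G^H`: join every vertex of `H` to every other vertex. -/
def coneGraph (G : SimpleGraph V) (H : Finset V) : SimpleGraph V where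
  Adj x y := x ≠ y ∧ (G.Adj x y ∨ x ∈ H ∨ y ∈ H)
  symm := ⟨by
    rintro x y ⟨hxy, h⟩
    refine ⟨hxy.symm, ?_⟩
    rcases h with h | h | h
    · exact Or.inl (G.adj_symm h)
    · exact Or.inr (Or.inr h)
    · exact Or.inr (Or.inl h)⟩
  loopless := ⟨fun x h => h.1 rfl⟩

/-- The graph `G` together with the extra edge `ab`. -/
def addEdge (G : SimpleGraph V) (a b : V) : SimpleGraph V :=
  G ⊔ SimpleGraph.fromEdgeSet {s(a, b)}

/-- `C` is fully coned with respect to `H`: every vertex of `H` is adjacent to every other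
vertex of `skel C`, and every `(d+1)`-clique of `skel C` is a facet of `C`. -/
def FullyConed (C : Finset (Finset V)) (d : ℕ) (H : Finset V) : Prop :=
  (∀ h ∈ H, ∀ v : V, ({v} : Finset V) ∈ C → v ≠ h → (skel C).Adj h v) ∧
  (∀ s : Finset V, (skel C).IsClique (↑s : Set V) → s.card = d + 1 → IsFacet C s)

/-- Every face of a finite collection lies in a maximal face. -/
lemma exists_facet_above (S : Finset (Finset V)) (A : Finset V) (hA : A ∈ S) :
    ∃ K, IsFacet S K ∧ A ⊆ K := by
  obtain ⟨K, hK, hmax⟩ := (S.filter (fun G => A ⊆ G)).exists_maximal ⟨A, by simp [hA]⟩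
  simp only [mem_filter] at hK
  refine ⟨K, ⟨hK.1, fun G hG hKG => ?_⟩, hK.2⟩
  by_contra hne
  exact hne (le_antisymm hKG (hmax (mem_filter.mpr ⟨hG, hK.2.trans hKG⟩) hKG))

/-- Gluing criterion for shedding faces. -/
theorem gluing_criterion (C : Finset (Finset V)) (d : ℕ) (F : Finset V)
    (hC : IsComplex C) (hP : IsPure C d) (hF : F ∈ C) (hFne : F.Nonempty) :
    IsPure (del C F) d ↔
      ∀ f ∈ F, ∀ H : Finset V, IsFacet C H → F ⊆ H →
        ∃ H' : Finset V, IsFacet C H' ∧ H ∩ H' = H.erase f := by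
  constructor
  · intro hpure f hf H hH hFH
    have hGC : H.erase f ∈ C := hC H hH.1 _ (erase_subset f H)
    have hGdel : H.erase f ∈ del C F := by
      refine mem_filter.mpr ⟨hGC, fun hsub => (notMem_erase f H) (hsub hf)⟩
    obtain ⟨K, hKfacet, hGK⟩ := exists_facet_above _ _ hGdel
    have hKcard : K.card = d + 1 := hpure K hKfacet
    have hKC : K ∈ C := (mem_filter.mp hKfacet.1).1
    have hKnF : ¬ F ⊆ K := (mem_filter.mp hKfacet.1).2
    obtain ⟨M, hMfacet, hKM⟩ := exists_facet_above C K hKC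
    have hKMeq : K = M :=
      eq_of_subset_of_card_le hKM (by rw [hKcard, hP M hMfacet])
    have hfK : f ∉ K := by
      intro hfK
      have hHK : H ⊆ K := by
        intro x hx
        by_cases hxf : x = f
        · subst hxf; exact hfK
        · exact hGK (mem_erase.mpr ⟨hxf, hx⟩)
      have : H = K := eq_of_subset_of_card_le hHK (by rw [hKcard, hP H hH])
      exact hKnF (this ▸ hFH)
    refine ⟨K, hKMeq ▸ hMfacet, ?_⟩
    apply subset_antisymm
    · intro x hx
      rcases mem_inter.mp hx with ⟨h1, h2⟩
      exact mem_erase.mpr ⟨fun h => hfK (h ▸ h2), h1⟩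
    · intro x hx
      exact mem_inter.mpr ⟨(erase_subset f H) hx, hGK hx⟩
  · intro hcond K hKfacet
    have hKC : K ∈ C := (mem_filter.mp hKfacet.1).1
    have hKnF : ¬ F ⊆ K := (mem_filter.mp hKfacet.1).2
    obtain ⟨H, hHfacet, hKH⟩ := exists_facet_above C K hKC
    have hHcard : H.card = d + 1 := hP H hHfacet
    by_cases hFH : F ⊆ H
    · exfalso
      obtain ⟨f, hfF, hfK⟩ := not_subset.mp hKnF
      have hKG : K ⊆ H.erase f := fun x hx =>
        mem_erase.mpr ⟨fun h => hfK (h ▸ hx), hKH hx⟩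
      have hGdel : H.erase f ∈ del C F :=
        mem_filter.mpr ⟨hC H hHfacet.1 _ (erase_subset f H),
          fun hsub => notMem_erase f H (hsub hfF)⟩
      have hKeq : K = H.erase f := hKfacet.2 _ hGdel hKG
      obtain ⟨H', hH'facet, hinter⟩ := hcond f hfF H hHfacet hFH
      have hKsub' : K ⊆ H' := by
        rw [hKeq, ← hinter]; exact inter_subset_right
      have hKcard : K.card = d := by
        have := card_erase_of_mem (hFH hfF)
        rw [hKeq, this, hHcard]; omega
      have hne : K ≠ H' := fun h => by
        rw [h, hP H' hH'facet] at hKcard; omega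
      obtain ⟨g, hgH', hgK⟩ :=
        exists_of_ssubset (Finset.ssubset_iff_subset_ne.mpr ⟨hKsub', hne⟩)
      have hgf : g ≠ f := by
        intro h; subst h
        have hmem : g ∈ H ∩ H' := mem_inter.mpr ⟨hFH hfF, hgH'⟩
        rw [hinter] at hmem
        exact (notMem_erase g H) hmem
      have hnew : insert g K ∈ del C F := by
        refine mem_filter.mpr ⟨hC H' hH'facet.1 _ ?_, ?_⟩
        · intro x hx
          rcases mem_insert.mp hx with h | h
          · subst h; exact hgH'
          · exact hKsub' h
        · intro hsub
          rcases mem_insert.mp (hsub hfF) with h | h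
          · exact hgf h.symm
          · exact hfK h
      have heq := hKfacet.2 _ hnew (subset_insert g K)
      exact hgK (heq ▸ mem_insert_self g K)
    · have : K = H := hKfacet.2 H (mem_filter.mpr ⟨hHfacet.1, hFH⟩) hKH
      rw [this, hHcard]
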